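/- Let $X_1, X_2, \ldots$ be iid with the exponential distribution $F(x) = 1 - e^{-\alpha x}$ for $x > 0$, where $\alpha > 0$, and let $X_{1:n} \le \cdots \le X_{n:n}$ be the order statistics of the first $n$. Then the random sets $\{(-\tfrac{1}{\alpha}\log(1 - \tfrac{i}{n+1}), X_{i:n}) : 1 \le i \le n\}$ converge in probability, in the Fell topology, to $\{(x,x) : 0 \le x < \infty\}$; equivalently, for every continuous $h : \mathbb{R}^2 \to [0,\infty)$ with compact support, $\mathbb{E}\big[\max_{1 \le i \le n} h(-\tfrac{1}{\alpha}\log(1 - \tfrac{i}{n+1}), X_{i:n})\big] \to \sup_{x \ge 0} h(x,x)$ as $n \to \infty$. -/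

import Mathlib

open MeasureTheory Filter Set ProbabilityTheory
open Topology

noncomputable section
namespace QQaux

def Fc (a t : ℝ) : ℝ := 1 - Real.exp (-(a * t))
def Tc (a p : ℝ) : ℝ := -(1 / a) * Real.log (1 - p)

lemma Fc_mono {a : ℝ} (ha : 0 < a) : Monotone (Fc a) := by
  intro s t hst
  have : Real.exp (-(a*t)) ≤ Real.exp (-(a*s)) := Real.exp_le_exp.2 (by nlinarith)
  simp only [Fc]; linarith

lemma Fc_nonneg {a t : ℝ} (ha : 0 < a) (ht : 0 ≤ t) : 0 ≤ Fc a t := by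
  have : Real.exp (-(a*t)) ≤ 1 := Real.exp_le_one_iff.2 (by nlinarith)
  simp only [Fc]; linarith

lemma Fc_lt_one {a t : ℝ} : Fc a t < 1 := by
  have := Real.exp_pos (-(a*t)); simp only [Fc]; linarith

lemma Fc_Tc {a p : ℝ} (ha : 0 < a) (hp : p < 1) : Fc a (Tc a p) = p := by
  have h1 : (0:ℝ) < 1 - p := by linarith
  have : -(a * Tc a p) = Real.log (1 - p) := by
    simp only [Tc]; field_simp
  rw [Fc, this, Real.exp_log h1]; ring

lemma Tc_Fc {a t : ℝ} (ha : 0 < a) : Tc a (Fc a t) = t := by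
  have : (1:ℝ) - Fc a t = Real.exp (-(a*t)) := by simp [Fc]
  rw [Tc, this, Real.log_exp]; field_simp

lemma Tc_nonneg {a p : ℝ} (ha : 0 < a) (hp0 : 0 ≤ p) (hp1 : p < 1) : 0 ≤ Tc a p := by
  have hlog : Real.log (1 - p) ≤ 0 := Real.log_nonpos (by linarith) (by linarith)
  have h1a : 0 < 1/a := by positivity
  rw [Tc]; nlinarith

lemma Fc_gap {a x y d R : ℝ} (ha : 0 < a) (hx : 0 ≤ x) (hd : 0 < d)
    (hxy : x + d ≤ y) (hyR : y ≤ R) :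
    Real.exp (-(a*R)) * (1 - Real.exp (-(a*d))) ≤ Fc a y - Fc a x := by
  have h1 : Real.exp (-(a*y)) ≤ Real.exp (-(a*x)) * Real.exp (-(a*d)) := by
    rw [← Real.exp_add]; exact Real.exp_le_exp.2 (by nlinarith)
  have h2 : Real.exp (-(a*R)) ≤ Real.exp (-(a*x)) := Real.exp_le_exp.2 (by nlinarith)
  have h3 : Real.exp (-(a*d)) ≤ 1 := Real.exp_le_one_iff.2 (by nlinarith)
  have h4 : Fc a y - Fc a x = Real.exp (-(a*x)) - Real.exp (-(a*y)) := by simp [Fc]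
  nlinarith


lemma step2 {a : ℝ} (ha : 0 < a) (x : ℕ → ℕ → ℝ) (N : ℝ → ℕ → ℕ)
    (hpos : ∀ n i, 1 ≤ i → i ≤ n → 0 < x n i)
    (hchar : ∀ n i t, 1 ≤ i → i ≤ n → (x n i ≤ t ↔ i ≤ N t n))
    (hNmono : ∀ n, Monotone fun t => N t n)
    (hLLN : ∀ q : ℚ, 0 ≤ q →
      Tendsto (fun n : ℕ => (N (q:ℝ) n : ℝ) / n) atTop (𝓝 (Fc a q)))
    {e M : ℝ} (he : 0 < e) (hM : 0 ≤ M) :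
    ∀ᶠ n : ℕ in atTop, ∀ i, 1 ≤ i → i ≤ n → Tc a ((i:ℝ)/((n:ℝ)+1)) ≤ M →
      |x n i - Tc a ((i:ℝ)/((n:ℝ)+1))| ≤ e := by
  obtain ⟨r, hr0, hre⟩ := exists_rat_btwn (show (0:ℝ) < e/4 by linarith)
  have hr0' : 0 < (r:ℝ) := hr0
  have hrQ : (0:ℚ) ≤ r := by exact_mod_cast hr0'.le
  set γ := Real.exp (-(a*(M+e))) * (1 - Real.exp (-(a*(e/4)))) with hγdef
  have hγ : 0 < γ := by
    apply mul_pos (Real.exp_pos _)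
    have : Real.exp (-(a*(e/4))) < 1 := Real.exp_lt_one_iff.2 (by nlinarith)
    linarith
  set J := ⌈(M+e)/(r:ℝ)⌉₊ with hJ
  have hJr : M + e ≤ (J:ℝ) * r := by
    have := Nat.le_ceil ((M+e)/(r:ℝ))
    rw [div_le_iff₀ hr0'] at this; exact this
  have E1 : ∀ᶠ n : ℕ in atTop, ∀ j ∈ Finset.range (J+1),
      |(N ((j:ℝ)*(r:ℝ)) n : ℝ)/n - Fc a ((j:ℝ)*(r:ℝ))| ≤ γ/2 := by
    rw [eventually_all_finset]
    intro j _
    have hT := hLLN ((j:ℚ)*r) (by positivity)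
    have hcast : (((j:ℚ)*r : ℚ) : ℝ) = (j:ℝ)*(r:ℝ) := by push_cast; ring
    rw [hcast] at hT
    obtain ⟨K, hK⟩ := Metric.tendsto_atTop.1 hT (γ/2) (half_pos hγ)
    filter_upwards [eventually_ge_atTop K] with n hn
    have := hK n hn
    rw [Real.dist_eq] at this
    exact this.le
  have E2 : ∀ᶠ n : ℕ in atTop, (2/γ) ≤ (n:ℝ) :=
    tendsto_natCast_atTop_atTop.eventually_ge_atTop _
  filter_upwards [E1, E2, eventually_ge_atTop 1] with n hE1 hn2 hn1
  intro i hi1 hin htM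
  have hn1' : (1:ℝ) ≤ (n:ℝ) := by exact_mod_cast hn1
  have hn0 : (0:ℝ) < (n:ℝ) := by linarith
  set p := (i:ℝ)/((n:ℝ)+1) with hp
  have hi1' : (1:ℝ) ≤ (i:ℝ) := by exact_mod_cast hi1
  have hin' : (i:ℝ) ≤ (n:ℝ) := by exact_mod_cast hin
  have hp0 : 0 < p := by rw [hp]; positivity
  have hp1 : p < 1 := by rw [hp, div_lt_one (by linarith)]; linarith
  set t := Tc a p with ht
  have hFt : Fc a t = p := Fc_Tc ha hp1
  have ht0 : 0 ≤ t := Tc_nonneg ha hp0.le hp1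
  have hip : (i:ℝ) = ((n:ℝ)+1) * p := by
    rw [hp, mul_comm, div_mul_cancel₀ _ (show ((n:ℝ)+1) ≠ 0 by linarith)]
  have hγn : 1 ≤ (n:ℝ) * (γ/2) := by
    have h2 : (2/γ)*γ = 2 := div_mul_cancel₀ 2 hγ.ne'
    nlinarith
  have hup : x n i ≤ t + e := by
    set j := ⌈(t + e/4)/(r:ℝ)⌉₊ with hj
    have harg : 0 ≤ (t + e/4)/(r:ℝ) := by positivity
    have hg1 : t + e/4 ≤ (j:ℝ)*r := by
      rw [← div_le_iff₀ hr0']; exact Nat.le_ceil _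
    have hg2 : (j:ℝ)*r ≤ t + e/2 := by
      have h1 := Nat.ceil_lt_add_one harg
      have h2 : (j:ℝ)*r < (t+e/4) + r := by
        have h3 : (j:ℝ)*r < ((t+e/4)/(r:ℝ) + 1)*r := mul_lt_mul_of_pos_right h1 hr0'
        have h4 : ((t+e/4)/(r:ℝ) + 1)*r = (t+e/4) + r := by
          rw [add_mul, one_mul, div_mul_cancel₀ _ hr0'.ne']
        linarith
      linarith
    have hjJ : j ∈ Finset.range (J+1) := by
      rw [Finset.mem_range, Nat.lt_succ_iff]
      have hjr : (j:ℝ)*r ≤ (J:ℝ)*r := by linarith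
      have : (j:ℝ) ≤ (J:ℝ) := le_of_mul_le_mul_right hjr hr0'
      exact_mod_cast this
    have hgap : γ ≤ Fc a ((j:ℝ)*r) - Fc a t :=
      Fc_gap ha ht0 (show (0:ℝ) < e/4 by linarith) hg1 (by linarith)
    have hN := hE1 j hjJ
    have hNg : (Fc a ((j:ℝ)*r) - γ/2) * n ≤ (N ((j:ℝ)*(r:ℝ)) n : ℝ) := by
      have h1 := (abs_le.1 hN).1
      have h2 : Fc a ((j:ℝ)*r) - γ/2 ≤ (N ((j:ℝ)*(r:ℝ)) n : ℝ)/n := by linarith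
      rwa [le_div_iff₀ hn0] at h2
    have hmono := hNmono n (show ((j:ℝ)*(r:ℝ)) ≤ t + e by linarith)
    rw [hchar n i (t+e) hi1 hin]
    have hfin : (i:ℝ) ≤ (N (t+e) n : ℝ) := by
      have key : (i:ℝ) ≤ (Fc a ((j:ℝ)*r) - γ/2) * n := by
        have hstep : p + γ/2 ≤ Fc a ((j:ℝ)*r) - γ/2 := by linarith
        have := mul_le_mul_of_nonneg_right hstep hn0.le
        linarith
      calc (i:ℝ) ≤ (Fc a ((j:ℝ)*r) - γ/2) * n := key
        _ ≤ (N ((j:ℝ)*(r:ℝ)) n : ℝ) := hNg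
        _ ≤ (N (t+e) n : ℝ) := by exact_mod_cast hmono
    exact_mod_cast hfin
  have hlo : t - e < x n i := by
    by_contra hcon; push_neg at hcon
    have hNi : i ≤ N (t-e) n := (hchar n i (t-e) hi1 hin).1 hcon
    have hx1 : x n 1 ≤ t - e := (hchar n 1 (t-e) le_rfl hn1).2 (le_trans hi1 hNi)
    have hx1pos := hpos n 1 le_rfl hn1
    have hte : e < t := by linarith
    set j := ⌊(t - e/4)/(r:ℝ)⌋₊ with hj
    have harg : 0 ≤ (t - e/4)/(r:ℝ) := div_nonneg (by linarith) hr0'.le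
    have hg1 : (j:ℝ)*r ≤ t - e/4 := by
      have h1 := Nat.floor_le harg
      calc (j:ℝ)*r ≤ ((t - e/4)/(r:ℝ))*r := mul_le_mul_of_nonneg_right h1 hr0'.le
        _ = t - e/4 := div_mul_cancel₀ _ hr0'.ne'
    have hg2 : t - e/2 ≤ (j:ℝ)*r := by
      have h1 := Nat.lt_floor_add_one ((t - e/4)/(r:ℝ))
      have h2 : t - e/4 < ((j:ℝ)+1)*r := by
        calc t - e/4 = ((t - e/4)/(r:ℝ))*r := (div_mul_cancel₀ _ hr0'.ne').symm
          _ < ((j:ℝ)+1)*r := mul_lt_mul_of_pos_right h1 hr0'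
      have h3 : ((j:ℝ)+1)*r = (j:ℝ)*r + r := by ring
      linarith
    have hjJ : j ∈ Finset.range (J+1) := by
      rw [Finset.mem_range, Nat.lt_succ_iff]
      have hjr : (j:ℝ)*r ≤ (J:ℝ)*r := by linarith
      have : (j:ℝ) ≤ (J:ℝ) := le_of_mul_le_mul_right hjr hr0'
      exact_mod_cast this
    have hj0 : (0:ℝ) ≤ (j:ℝ)*r := by positivity
    have hgap : γ ≤ Fc a t - Fc a ((j:ℝ)*r) :=
      Fc_gap ha hj0 (show (0:ℝ) < e/4 by linarith) (by linarith) (by linarith)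
    have hN := hE1 j hjJ
    have hNg : (N ((j:ℝ)*(r:ℝ)) n : ℝ) ≤ (Fc a ((j:ℝ)*r) + γ/2) * n := by
      have h1 := (abs_le.1 hN).2
      have h2 : (N ((j:ℝ)*(r:ℝ)) n : ℝ)/n ≤ Fc a ((j:ℝ)*r) + γ/2 := by linarith
      rwa [div_le_iff₀ hn0] at h2
    have hmono := hNmono n (show t - e ≤ ((j:ℝ)*(r:ℝ)) by linarith)
    have hNi' : (i:ℝ) ≤ (N (t-e) n : ℝ) := by exact_mod_cast hNi
    have hmono' : (N (t-e) n : ℝ) ≤ (N ((j:ℝ)*(r:ℝ)) n : ℝ) := by exact_mod_cast hmono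
    have hstep : Fc a ((j:ℝ)*r) + γ/2 ≤ p - γ/2 := by linarith
    have hmul := mul_le_mul_of_nonneg_right hstep hn0.le
    have : (i:ℝ) < (i:ℝ) := by linarith
    exact absurd this (lt_irrefl _)
  exact abs_le.2 ⟨by linarith, by linarith⟩


lemma key {a : ℝ} (ha : 0 < a) (h : ℝ × ℝ → ℝ) (hc : Continuous h) (h0 : ∀ q, 0 ≤ h q)
    (hcs : HasCompactSupport h) (x : ℕ → ℕ → ℝ) (N : ℝ → ℕ → ℕ)
    (hpos : ∀ n i, 1 ≤ i → i ≤ n → 0 < x n i)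
    (hchar : ∀ n i t, 1 ≤ i → i ≤ n → (x n i ≤ t ↔ i ≤ N t n))
    (hNmono : ∀ n, Monotone fun t => N t n)
    (hLLN : ∀ q : ℚ, 0 ≤ q →
      Tendsto (fun n : ℕ => (N (q:ℝ) n : ℝ) / n) atTop (𝓝 (Fc a q))) :
    Tendsto (fun n : ℕ => sSup (h '' {q : ℝ × ℝ | ∃ i : ℕ, 1 ≤ i ∧ i ≤ n ∧
        q = (Tc a ((i:ℝ)/((n:ℝ)+1)), x n i)})) atTop
      (𝓝 (sSup (h '' {q : ℝ × ℝ | ∃ t : ℝ, 0 ≤ t ∧ q = (t, t)}))) := by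
  obtain ⟨C, hC⟩ := hc.bounded_above_of_compact_support hcs
  have hC' : ∀ q, h q ≤ C := fun q => (le_abs_self _).trans (by simpa [Real.norm_eq_abs] using hC q)
  have hC0 : 0 ≤ C := le_trans (h0 (0,0)) (hC' (0,0))
  obtain ⟨M', hM'⟩ := hcs.isBounded.subset_closedBall 0
  set M := max M' 0 with hMdef
  have hM0 : 0 ≤ M := le_max_right _ _
  have hMsub : tsupport h ⊆ Metric.closedBall 0 M :=
    hM'.trans (Metric.closedBall_subset_closedBall (le_max_left _ _))
  have hsupp : ∀ q : ℝ × ℝ, M < |q.1| → h q = 0 := by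
    intro q hq
    by_contra hne
    have h1 : q ∈ tsupport h := subset_tsupport _ hne
    have h2 := hMsub h1
    rw [Metric.mem_closedBall, dist_zero_right] at h2
    have h3 : |q.1| ≤ ‖q‖ := norm_fst_le q
    linarith
  set D := h '' {q : ℝ × ℝ | ∃ t : ℝ, 0 ≤ t ∧ q = (t, t)} with hD
  set L := sSup D with hL
  have hDne : D.Nonempty := ⟨h (0,0), ⟨(0,0), ⟨0, le_rfl, rfl⟩, rfl⟩⟩
  have hDbdd : BddAbove D := ⟨C, by rintro y ⟨q, _, rfl⟩; exact hC' q⟩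
  have hdiag : ∀ t : ℝ, 0 ≤ t → h (t,t) ≤ L :=
    fun t ht => le_csSup hDbdd ⟨(t,t), ⟨t, ht, rfl⟩, rfl⟩
  have hL0 : 0 ≤ L := le_trans (h0 (0,0)) (hdiag 0 le_rfl)
  rw [Metric.tendsto_nhds]
  intro ε hε
  obtain ⟨δ, hδ0, hδ⟩ := Metric.uniformContinuous_iff.1
    (hcs.uniformContinuous_of_continuous hc) (ε/2) (by linarith)
  set e := min (δ/4) 1 with he_def
  have he : 0 < e := lt_min (by linarith) one_pos
  have he1 : e ≤ 1 := min_le_right _ _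
  have heδ : e ≤ δ/4 := min_le_left _ _
  have hA := step2 ha x N hpos hchar hNmono hLLN he (show (0:ℝ) ≤ M+1 by linarith)
  have hbddim : ∀ n : ℕ, BddAbove (h '' {q : ℝ × ℝ | ∃ i : ℕ, 1 ≤ i ∧ i ≤ n ∧
      q = (Tc a ((i:ℝ)/((n:ℝ)+1)), x n i)}) :=
    fun n => ⟨C, by rintro y ⟨q, _, rfl⟩; exact hC' q⟩
  have htin : ∀ n i : ℕ, 1 ≤ i → i ≤ n → 0 ≤ Tc a ((i:ℝ)/((n:ℝ)+1)) := by
    intro n i h1 h2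
    have h1' : (1:ℝ) ≤ (i:ℝ) := by exact_mod_cast h1
    have h2' : (i:ℝ) ≤ (n:ℝ) := by exact_mod_cast h2
    exact Tc_nonneg ha (by positivity) (by rw [div_lt_one (by linarith)]; linarith)
  have hupper : ∀ᶠ n : ℕ in atTop, sSup (h '' {q : ℝ × ℝ | ∃ i : ℕ, 1 ≤ i ∧ i ≤ n ∧
      q = (Tc a ((i:ℝ)/((n:ℝ)+1)), x n i)}) ≤ L + ε/2 := by
    filter_upwards [hA] with n hn
    apply Real.sSup_le _ (by linarith)
    rintro y ⟨q, ⟨i, hi1, hin, rfl⟩, rfl⟩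
    set t := Tc a ((i:ℝ)/((n:ℝ)+1)) with htdef
    have ht0 : 0 ≤ t := htin n i hi1 hin
    by_cases htM : t ≤ M
    · have hclose := hn i hi1 hin (le_trans htM (by linarith))
      have hd : dist ((t, x n i) : ℝ × ℝ) ((t,t) : ℝ × ℝ) < δ := by
        rw [Prod.dist_eq]
        apply max_lt
        · rw [Real.dist_eq, sub_self, abs_zero]; linarith
        · rw [Real.dist_eq]; calc |x n i - t| ≤ e := hclose
            _ < δ := by linarith
      have hd2 := hδ hd
      rw [Real.dist_eq] at hd2
      have := (abs_lt.1 hd2).2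
      have := hdiag t ht0
      linarith
    · push_neg at htM
      rw [hsupp (t, x n i) (by rw [abs_of_nonneg ht0]; exact htM)]
      linarith
  have hlower : ∀ᶠ n : ℕ in atTop, L - ε < sSup (h '' {q : ℝ × ℝ | ∃ i : ℕ, 1 ≤ i ∧ i ≤ n ∧
      q = (Tc a ((i:ℝ)/((n:ℝ)+1)), x n i)}) := by
    by_cases hLε : L ≤ ε/2
    · filter_upwards [eventually_ge_atTop 1] with n h1n
      have hmem : h (Tc a ((1:ℝ)/((n:ℝ)+1)), x n 1) ∈ h '' {q : ℝ × ℝ | ∃ i : ℕ, 1 ≤ i ∧ i ≤ n ∧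
          q = (Tc a ((i:ℝ)/((n:ℝ)+1)), x n i)} := ⟨_, ⟨1, le_rfl, h1n, by norm_num⟩, rfl⟩
      have h0' := h0 (Tc a ((1:ℝ)/((n:ℝ)+1)), x n 1)
      have hle := le_csSup (hbddim n) hmem
      linarith
    · push_neg at hLε
      obtain ⟨y, hyD, hyL⟩ := exists_lt_of_lt_csSup hDne (show L - ε/2 < L by linarith)
      obtain ⟨q, ⟨s, hs0, rfl⟩, rfl⟩ := hyD
      have hhs : 0 < h (s,s) := by linarith
      have hsM : s ≤ M := by
        by_contra hgt; push_neg at hgt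
        rw [hsupp (s,s) (by rw [abs_of_nonneg hs0]; exact hgt)] at hhs
        exact absurd hhs (lt_irrefl _)
      set p := Fc a s with hpdef
      have hp0 : 0 ≤ p := Fc_nonneg ha hs0
      have hp1 : p < 1 := Fc_lt_one
      set I : ℕ → ℕ := fun n => max 1 ⌈((n:ℝ)+1) * p⌉₊ with hI
      have hI1 : ∀ n, 1 ≤ I n := fun n => le_max_left _ _
      have hIle : ∀ n : ℕ, (I n : ℝ) ≤ ((n:ℝ)+1)*p + 1 := by
        intro n
        have h1 : (⌈((n:ℝ)+1)*p⌉₊ : ℝ) ≤ ((n:ℝ)+1)*p + 1 :=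
          (Nat.ceil_lt_add_one (by positivity)).le
        have h2 : (I n : ℝ) = max 1 (⌈((n:ℝ)+1)*p⌉₊ : ℝ) := by
          rw [hI]; push_cast [Nat.cast_max]; rfl
        rw [h2]
        apply max_le (by nlinarith) h1
      have hfr_lo : ∀ n : ℕ, p ≤ (I n : ℝ)/((n:ℝ)+1) := by
        intro n
        have hpos' : (0:ℝ) < (n:ℝ)+1 := by positivity
        rw [le_div_iff₀ hpos', mul_comm]
        calc ((n:ℝ)+1)*p ≤ (⌈((n:ℝ)+1)*p⌉₊ : ℝ) := Nat.le_ceil _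
          _ ≤ (I n : ℝ) := by
              simp only [hI]
              exact_mod_cast Nat.cast_le.2 (le_max_right 1 _)
      have hfr_hi : ∀ n : ℕ, (I n : ℝ)/((n:ℝ)+1) ≤ p + 2/((n:ℝ)+1) := by
        intro n
        have hpos' : (0:ℝ) < (n:ℝ)+1 := by positivity
        rw [div_le_iff₀ hpos', add_mul, div_mul_cancel₀ _ hpos'.ne']
        have := hIle n
        nlinarith
      have hden : Tendsto (fun n : ℕ => ((n:ℝ)+1)) atTop atTop :=
        tendsto_atTop_add_const_right _ _ tendsto_natCast_atTop_atTop
      have hub : Tendsto (fun n : ℕ => p + 2/((n:ℝ)+1)) atTop (𝓝 (p + 0)) :=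
        tendsto_const_nhds.add (Tendsto.div_atTop tendsto_const_nhds hden)
      rw [add_zero] at hub
      have hfr : Tendsto (fun n : ℕ => (I n : ℝ)/((n:ℝ)+1)) atTop (𝓝 p) :=
        tendsto_of_tendsto_of_tendsto_of_le_of_le tendsto_const_nhds hub hfr_lo hfr_hi
      have hTcont : ContinuousAt (Tc a) p := by
        have h1p : (1:ℝ) - p ≠ 0 := by linarith
        apply ContinuousAt.mul continuousAt_const
        exact (Real.continuousAt_log h1p).comp ((continuous_const.sub continuous_id).continuousAt)
      have hTt : Tendsto (fun n : ℕ => Tc a ((I n : ℝ)/((n:ℝ)+1))) atTop (𝓝 s) := by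
        have := hTcont.tendsto.comp hfr
        rwa [show Tc a p = s from Tc_Fc ha] at this
      have hEc : ∀ᶠ n : ℕ in atTop, |Tc a ((I n : ℝ)/((n:ℝ)+1)) - s| ≤ e := by
        obtain ⟨K, hK⟩ := Metric.tendsto_atTop.1 hTt e he
        filter_upwards [eventually_ge_atTop K] with n hn
        have := hK n hn; rw [Real.dist_eq] at this; exact this.le
      have hEd : ∀ᶠ n : ℕ in atTop, I n ≤ n := by
        have := tendsto_natCast_atTop_atTop (R := ℝ)
        filter_upwards [this.eventually_ge_atTop ((2+p)/(1-p))] with n hn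
        have h1p : (0:ℝ) < 1 - p := by linarith
        rw [div_le_iff₀ h1p] at hn
        have := hIle n
        have : (I n : ℝ) ≤ (n:ℝ) := by nlinarith
        exact_mod_cast this
      filter_upwards [hA, hEc, hEd, eventually_ge_atTop 1] with n hn hc' hd' h1n
      set i := I n with hidef
      set ti := Tc a ((i:ℝ)/((n:ℝ)+1)) with htidef
      have habs := abs_le.1 hc'
      have hti_le : ti ≤ M + 1 := by linarith [habs.2]
      have hclose := hn i (hI1 n) hd' hti_le
      have habs2 := abs_le.1 hclose
      have hdist : dist ((ti, x n i) : ℝ × ℝ) ((s,s) : ℝ × ℝ) < δ := by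
        rw [Prod.dist_eq]
        apply max_lt
        · rw [Real.dist_eq]; calc |ti - s| ≤ e := hc'
            _ < δ := by linarith
        · rw [Real.dist_eq]
          calc |x n i - s| ≤ |x n i - ti| + |ti - s| := abs_sub_le _ _ _
            _ ≤ e + e := add_le_add hclose hc'
            _ < δ := by linarith
      have hd2 := hδ hdist
      rw [Real.dist_eq] at hd2
      have hgt := (abs_lt.1 hd2).1
      have hmem : h (ti, x n i) ∈ h '' {q : ℝ × ℝ | ∃ i : ℕ, 1 ≤ i ∧ i ≤ n ∧
          q = (Tc a ((i:ℝ)/((n:ℝ)+1)), x n i)} := ⟨_, ⟨i, hI1 n, hd', rfl⟩, rfl⟩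
      have hle := le_csSup (hbddim n) hmem
      linarith
  filter_upwards [hupper, hlower] with n h1 h2
  rw [Real.dist_eq, abs_sub_lt_iff]
  constructor <;> linarith


end QQaux
end

open QQaux

/-- `ord n i ω` (for `1 ≤ i ≤ n`) is the `i`-th smallest among `X 1 ω, …, X n ω`:
increasing in `i`, and a rearrangement of the first `n` sample values. -/
def IsIncOrderStat {Ω : Type*} (X : ℕ → Ω → ℝ) (ord : ℕ → ℕ → Ω → ℝ) : Prop :=
  ∀ ω n, (∀ i j, 1 ≤ i → i ≤ j → j ≤ n → ord n i ω ≤ ord n j ω) ∧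
    ∃ σ : Equiv.Perm (Fin n), ∀ i : Fin n, ord n (i.1 + 1) ω = X ((σ i).1 + 1) ω

/-- If `X 1, X 2, …` are iid exponential with rate `α > 0`
(`F(x) = 1 - e^{-αx}`, `x > 0`), then the QQ-plot sets
`{(-(1/α) log(1 - i/(n+1)), X_{i:n}) : 1 ≤ i ≤ n}` converge in probability, in the Fell
topology, to the diagonal `{(x,x) : 0 ≤ x < ∞}`; equivalently, for every continuous
`h : ℝ² → [0,∞)` with compact support, the expected sup of `h` over the random set
converges to the sup of `h` over the limit set. -/
theorem exponential_qqplot_tendstoInProb {Ω : Type*} [MeasurableSpace Ω]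
    (μ : Measure Ω) [IsProbabilityMeasure μ]
    (X : ℕ → Ω → ℝ) (α : ℝ) (hα : 0 < α) (ord : ℕ → ℕ → Ω → ℝ)
    (hmeas : ∀ i, Measurable (X i))
    (hindep : iIndepFun X μ)
    (hcdf : ∀ i x, μ {ω | X i ω ≤ x} = ENNReal.ofReal (1 - Real.exp (-(α * x))))
    (hord : IsIncOrderStat X ord) :
    ∀ h : ℝ × ℝ → ℝ, Continuous h → (∀ q, 0 ≤ h q) → HasCompactSupport h →
      Tendsto
        (fun n => ∫ ω, sSup (h '' {q : ℝ × ℝ | ∃ i : ℕ, 1 ≤ i ∧ i ≤ n ∧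
            q = (-(1 / α) * Real.log (1 - (i : ℝ) / ((n : ℝ) + 1)), ord n i ω)}) ∂μ)
        atTop
        (nhds (sSup (h '' {q : ℝ × ℝ | ∃ t : ℝ, 0 ≤ t ∧ q = (t, t)}))) := by
  intro h hc h0 hcs
  classical
  -- counting function
  set Nf : ℝ → ℕ → Ω → ℕ :=
    fun t n ω => ((Finset.range n).filter (fun k => X (k+1) ω ≤ t)).card with hNf
  -- characterization of order statistics by counts
  have hchar : ∀ ω (n i : ℕ) (t : ℝ), 1 ≤ i → i ≤ n →
      (ord n i ω ≤ t ↔ i ≤ Nf t n ω) := by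
    intro ω n i t hi1 hin
    obtain ⟨hmono, σ, hσ⟩ := hord ω n
    have hcard : ((Finset.univ : Finset (Fin n)).filter
        (fun j => ord n (j.1+1) ω ≤ t)).card = Nf t n ω := by
      calc ((Finset.univ : Finset (Fin n)).filter (fun j => ord n (j.1+1) ω ≤ t)).card
          = ((Finset.univ : Finset (Fin n)).filter
              (fun j => X ((σ j).1+1) ω ≤ t)).card := by
            congr 1
            apply Finset.filter_congr
            intro j _
            rw [hσ j]
        _ = ((Finset.univ : Finset (Fin n)).filter (fun j => X (j.1+1) ω ≤ t)).card := by
            rw [Finset.card_filter, Finset.card_filter]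
            exact Equiv.sum_comp σ (fun j : Fin n => if X (j.1+1) ω ≤ t then 1 else 0)
        _ = Nf t n ω := by
            simp only [hNf, Finset.card_filter]
            exact Fin.sum_univ_eq_sum_range (fun k => if X (k+1) ω ≤ t then 1 else 0) n
    constructor
    · intro hxt
      have hsub : (Finset.univ.filter (fun j : Fin n => j.1 + 1 ≤ i)) ⊆
          (Finset.univ.filter (fun j : Fin n => ord n (j.1+1) ω ≤ t)) := by
        intro j hj
        simp only [Finset.mem_filter, Finset.mem_univ, true_and] at hj ⊢
        exact le_trans (hmono (j.1+1) i (by omega) hj hin) hxt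
      have hcard2 : (Finset.univ.filter (fun j : Fin n => j.1 + 1 ≤ i)).card = i := by
        rw [Finset.card_filter,
          Fin.sum_univ_eq_sum_range (fun k => if k + 1 ≤ i then 1 else 0) n,
          ← Finset.card_filter]
        have heq : (Finset.range n).filter (fun k => k + 1 ≤ i) = Finset.range i := by
          ext k
          simp only [Finset.mem_filter, Finset.mem_range]
          omega
        rw [heq, Finset.card_range]
      calc i = _ := hcard2.symm
        _ ≤ _ := Finset.card_le_card hsub
        _ = Nf t n ω := hcard
    · intro hNi
      by_contra hlt
      push_neg at hlt
      have hsub : (Finset.univ.filter (fun j : Fin n => ord n (j.1+1) ω ≤ t)) ⊆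
          (Finset.univ.filter (fun j : Fin n => j.1 + 1 < i)) := by
        intro j hj
        simp only [Finset.mem_filter, Finset.mem_univ, true_and] at hj ⊢
        by_contra hge
        push_neg at hge
        exact absurd (le_trans (hmono i (j.1+1) hi1 hge (by omega)) hj) (not_le.2 hlt)
      have hcard3 : (Finset.univ.filter (fun j : Fin n => j.1+1 < i)).card ≤ i - 1 := by
        rw [Finset.card_filter,
          Fin.sum_univ_eq_sum_range (fun k => if k + 1 < i then 1 else 0) n,
          ← Finset.card_filter]
        calc ((Finset.range n).filter (fun k => k + 1 < i)).card
            ≤ (Finset.range (i-1)).card := by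
              apply Finset.card_le_card
              intro k hk
              simp only [Finset.mem_filter, Finset.mem_range] at hk ⊢
              omega
          _ = i - 1 := Finset.card_range _
      have hfin : i ≤ i - 1 := by
        calc i ≤ Nf t n ω := hNi
          _ = _ := hcard.symm
          _ ≤ _ := Finset.card_le_card hsub
          _ ≤ i - 1 := hcard3
      omega
  -- monotonicity of counts
  have hNmono : ∀ ω (n : ℕ), Monotone (fun t => Nf t n ω) := by
    intro ω n t t' htt
    apply Finset.card_le_card
    exact Finset.monotone_filter_right _ (fun k _ hk => le_trans hk htt)
  -- measurability of counts
  have hNfmeas : ∀ (t : ℝ) (n : ℕ), Measurable (fun ω => Nf t n ω) := by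
    intro t n
    have heq : (fun ω => Nf t n ω) =
        fun ω => ∑ k ∈ Finset.range n, (if X (k+1) ω ≤ t then 1 else 0) := by
      funext ω
      rw [hNf]
      exact Finset.card_filter _ _
    rw [heq]
    apply Finset.measurable_sum
    intro k _
    exact Measurable.ite (measurableSet_le (hmeas _) measurable_const)
      measurable_const measurable_const
  -- measurability of order statistics
  have hordmeas : ∀ (n i : ℕ), 1 ≤ i → i ≤ n → Measurable (fun ω => ord n i ω) := by
    intro n i h1 h2
    apply measurable_of_Iic
    intro t
    have heq : (fun ω => ord n i ω) ⁻¹' (Iic t) = {ω | i ≤ Nf t n ω} := by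
      ext ω
      simp only [mem_preimage, mem_Iic, mem_setOf_eq]
      exact hchar ω n i t h1 h2
    rw [heq]
    exact measurableSet_le measurable_const (hNfmeas t n)
  -- identical distribution
  have hmap : ∀ k, Measure.map (X k) μ = Measure.map (X 1) μ := by
    intro k
    have h1 : IsProbabilityMeasure (Measure.map (X k) μ) :=
      Measure.isProbabilityMeasure_map (hmeas k).aemeasurable
    have h2 : IsProbabilityMeasure (Measure.map (X 1) μ) :=
      Measure.isProbabilityMeasure_map (hmeas 1).aemeasurable
    apply Measure.ext_of_Iic
    intro t
    rw [Measure.map_apply (hmeas k) measurableSet_Iic,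
      Measure.map_apply (hmeas 1) measurableSet_Iic]
    have e1 : X k ⁻¹' (Iic t) = {ω | X k ω ≤ t} := rfl
    have e2 : X 1 ⁻¹' (Iic t) = {ω | X 1 ω ≤ t} := rfl
    rw [e1, e2, hcdf k t, hcdf 1 t]
  have hident : ∀ k, IdentDistrib (X k) (X 1) μ μ :=
    fun k => ⟨(hmeas k).aemeasurable, (hmeas 1).aemeasurable, hmap k⟩
  -- strong law for the counting functions
  have hLLNq : ∀ q : ℚ, 0 ≤ q → ∀ᵐ ω ∂μ,
      Tendsto (fun n : ℕ => (Nf (q:ℝ) n ω : ℝ)/n) atTop (𝓝 (Fc α q)) := by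
    intro q hq0
    set φ : ℝ → ℝ := fun y => if y ≤ (q:ℝ) then 1 else 0 with hφdef
    have hφ : Measurable φ := by
      apply Measurable.ite _ measurable_const measurable_const
      exact measurableSet_Iic
    set Y : ℕ → Ω → ℝ := fun k => φ ∘ X (k+1) with hY
    have hYmeas : ∀ k, Measurable (Y k) := fun k => hφ.comp (hmeas (k+1))
    have hYindep : Pairwise (Function.onFun (IndepFun · · μ) Y) := by
      intro i j hij
      exact (hindep.indepFun (show i+1 ≠ j+1 by omega)).comp hφ hφ
    have hYident : ∀ k, IdentDistrib (Y k) (Y 0) μ μ := by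
      intro k
      have := ((hident (k+1)).trans (hident 1).symm)
      exact this.comp hφ
    have hYint : Integrable (Y 0) μ := by
      apply Integrable.mono' (integrable_const (1:ℝ)) (hYmeas 0).aestronglyMeasurable
      apply ae_of_all
      intro ω
      simp only [hY, hφdef, Function.comp_apply]
      split_ifs <;> simp
    have hEY : μ[Y 0] = Fc α q := by
      have heq : Y 0 = Set.indicator (X 1 ⁻¹' Iic (q:ℝ)) (fun _ => (1:ℝ)) := by
        funext ω
        by_cases hx : X 1 ω ≤ (q:ℝ) <;>
          simp [hY, hφdef, Set.indicator_apply, hx]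
      rw [heq, integral_indicator_const _ ((hmeas 1) measurableSet_Iic)]
      have e1 : X 1 ⁻¹' (Iic (q:ℝ)) = {ω | X 1 ω ≤ (q:ℝ)} := rfl
      have hnn : 0 ≤ 1 - Real.exp (-(α * (q:ℝ))) := by
        have h1 : Real.exp (-(α * (q:ℝ))) ≤ 1 := by
          apply Real.exp_le_one_iff.2
          have : (0:ℝ) ≤ (q:ℝ) := by exact_mod_cast hq0
          nlinarith
        linarith
      rw [e1, measureReal_def, hcdf 1 q, smul_eq_mul, mul_one, ENNReal.toReal_ofReal hnn]
      rfl
    have hSLLN := strong_law_ae Y hYint hYindep hYident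
    rw [hEY] at hSLLN
    filter_upwards [hSLLN] with ω hω
    have hsum : ∀ n : ℕ, ∑ k ∈ Finset.range n, Y k ω = (Nf (q:ℝ) n ω : ℝ) := by
      intro n
      simp only [hNf, Finset.card_filter]
      push_cast
      apply Finset.sum_congr rfl
      intro k _
      by_cases hx : X (k+1) ω ≤ (q:ℝ) <;> simp [hY, hφdef, hx]
    have heq2 : (fun n : ℕ => (Nf (q:ℝ) n ω : ℝ)/n) =
        fun n : ℕ => (n:ℝ)⁻¹ • (∑ k ∈ Finset.range n, Y k ω) := by
      funext n
      rw [hsum n, smul_eq_mul, inv_mul_eq_div]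
    rw [heq2]
    exact hω
  -- positivity
  have hposae : ∀ᵐ ω ∂μ, ∀ k, 0 < X k ω := by
    rw [ae_all_iff]
    intro k
    rw [ae_iff]
    have heq : {ω | ¬ 0 < X k ω} = {ω | X k ω ≤ 0} := by
      ext ω; simp [not_lt]
    rw [heq, hcdf k 0]
    simp
  -- a.e. convergence of the sups
  have hgood : ∀ᵐ ω ∂μ,
      Tendsto (fun n : ℕ => sSup (h '' {q : ℝ × ℝ | ∃ i : ℕ, 1 ≤ i ∧ i ≤ n ∧
          q = (-(1 / α) * Real.log (1 - (i : ℝ) / ((n : ℝ) + 1)), ord n i ω)})) atTop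
        (𝓝 (sSup (h '' {q : ℝ × ℝ | ∃ t : ℝ, 0 ≤ t ∧ q = (t, t)}))) := by
    have hq : ∀ᵐ ω ∂μ, ∀ q : ℚ, 0 ≤ q →
        Tendsto (fun n : ℕ => (Nf (q:ℝ) n ω : ℝ)/n) atTop (𝓝 (Fc α q)) := by
      rw [ae_all_iff]
      intro q
      by_cases hq0 : 0 ≤ q
      · filter_upwards [hLLNq q hq0] with ω hω _
        exact hω
      · apply ae_of_all
        intro ω hcontra
        exact absurd hcontra hq0
    filter_upwards [hq, hposae] with ω hω hpω
    have hres := key hα h hc h0 hcs (fun n i => ord n i ω) (fun t n => Nf t n ω)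
      ?_ (fun n i t h1 h2 => hchar ω n i t h1 h2) (fun n => hNmono ω n) hω
    · simpa only [Tc] using hres
    · intro n i h1 h2
      show 0 < ord n i ω
      obtain ⟨hmono, σ, hσ⟩ := hord ω n
      have hlt : i - 1 < n := by omega
      have hxi : ord n i ω = X ((σ ⟨i-1, hlt⟩).1 + 1) ω := by
        have h3 := hσ ⟨i-1, hlt⟩
        simpa [Nat.sub_add_cancel h1] using h3
      rw [hxi]
      exact hpω _
  -- bound and measurability, then dominated convergence
  obtain ⟨C, hCn⟩ := hc.bounded_above_of_compact_support hcs
  have hC' : ∀ q, h q ≤ C := fun q => (le_abs_self _).trans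
    (by simpa [Real.norm_eq_abs] using hCn q)
  have hC0 : 0 ≤ C := le_trans (h0 (0,0)) (hC' (0,0))
  set S : ℕ → Ω → ℝ := fun n ω => sSup (h '' {q : ℝ × ℝ | ∃ i : ℕ, 1 ≤ i ∧ i ≤ n ∧
      q = (-(1 / α) * Real.log (1 - (i : ℝ) / ((n : ℝ) + 1)), ord n i ω)}) with hS
  have hSmeas : ∀ n : ℕ, AEStronglyMeasurable (S n) μ := by
    intro n
    rcases Nat.eq_zero_or_pos n with hn | hn
    · subst hn
      have hz : S 0 = fun _ => (0:ℝ) := by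
        funext ω
        simp only [hS]
        have hemp : {q : ℝ × ℝ | ∃ i : ℕ, 1 ≤ i ∧ i ≤ 0 ∧
            q = (-(1 / α) * Real.log (1 - (i : ℝ) / (((0:ℕ) : ℝ) + 1)), ord 0 i ω)} = ∅ := by
          ext q
          simp only [mem_setOf_eq, mem_empty_iff_false, iff_false]
          rintro ⟨i, hi1, hi0, -⟩
          omega
        rw [hemp, image_empty, Real.sSup_empty]
      rw [hz]
      exact aestronglyMeasurable_const
    · have hne : (Finset.Icc 1 n).Nonempty := ⟨1, Finset.mem_Icc.2 ⟨le_rfl, hn⟩⟩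
      have hrw : S n = fun ω => (Finset.Icc 1 n).sup' hne
          (fun i => h (-(1 / α) * Real.log (1 - (i : ℝ) / ((n : ℝ) + 1)), ord n i ω)) := by
        funext ω
        simp only [hS]
        rw [Finset.sup'_eq_csSup_image]
        have hA : {q : ℝ × ℝ | ∃ i : ℕ, 1 ≤ i ∧ i ≤ n ∧
            q = (-(1 / α) * Real.log (1 - (i : ℝ) / ((n : ℝ) + 1)), ord n i ω)} =
            (fun i : ℕ => ((-(1 / α) * Real.log (1 - (i : ℝ) / ((n : ℝ) + 1)), ord n i ω) : ℝ × ℝ))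
              '' ↑(Finset.Icc 1 n) := by
          ext q
          simp only [mem_setOf_eq, Finset.coe_Icc, mem_image, mem_Icc]
          constructor
          · rintro ⟨i, h1, h2, rfl⟩; exact ⟨i, ⟨h1, h2⟩, rfl⟩
          · rintro ⟨i, ⟨h1, h2⟩, rfl⟩; exact ⟨i, h1, h2, rfl⟩
        rw [hA, Set.image_image]
      rw [hrw]
      have hsup : (fun ω => (Finset.Icc 1 n).sup' hne
          (fun i => h (-(1 / α) * Real.log (1 - (i : ℝ) / ((n : ℝ) + 1)), ord n i ω))) =
          (Finset.Icc 1 n).sup' hne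
            (fun i => (fun ω => h (-(1 / α) * Real.log (1 - (i : ℝ) / ((n : ℝ) + 1)), ord n i ω))) := by
        funext ω
        rw [Finset.sup'_apply]
      rw [hsup]
      apply Measurable.aestronglyMeasurable
      apply Finset.measurable_sup' hne
      intro i hi
      rw [Finset.mem_Icc] at hi
      exact hc.measurable.comp (measurable_const.prodMk (hordmeas n i hi.1 hi.2))
  have hSbound : ∀ n : ℕ, ∀ᵐ ω ∂μ, ‖S n ω‖ ≤ C := by
    intro n
    apply ae_of_all
    intro ω
    rw [Real.norm_eq_abs, abs_le]
    constructor
    · have : 0 ≤ S n ω := by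
        apply Real.sSup_nonneg
        rintro y ⟨q, -, rfl⟩
        exact h0 q
      linarith
    · apply Real.sSup_le _ hC0
      rintro y ⟨q, -, rfl⟩
      exact hC' q
  have hDCT := tendsto_integral_of_dominated_convergence (fun _ => C) hSmeas
    (integrable_const C) hSbound hgood
  rw [integral_const, probReal_univ, one_smul] at hDCT
  exact hDCT
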